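/- Let G be a finitely generated torsion-free nilpotent group of nilpotency class exactly 2, and let σ be an involution on G. Then G contains a σ-invariant Heisenberg subgroup; more precisely, there exist x, y ∈ G such that [x,y] ≠ 1, σ(x) ∈ {x, x⁻¹}, and σ(y) ∈ {y, y⁻¹}. -/

import Mathlib

/-- A monoid is torsion-free if all its non-identity elements have infinite order
(the definition of `Monoid.IsTorsionFree` in the older Mathlib, since removed). -/
def Monoid.IsTorsionFree (G : Type*) [Monoid G] : Prop :=
  ∀ g : G, g ≠ 1 → ¬IsOfFinOrder g

section Aux

variable {G : Type*} [Group G]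

/-- In a class-2 torsion-free group (packaged via hypotheses), commuting with a
square implies commuting. -/
lemma heis_sq (hc : ∀ a b : G, b⁻¹ * a⁻¹ * b * a ∈ Subgroup.center G)
    (h2 : ∀ g : G, g * g = 1 → g = 1) (a b : G)
    (h : a * a * b = b * (a * a)) : a * b = b * a := by
  set z := b⁻¹ * a⁻¹ * b * a with hz
  have hzc : ∀ g : G, g * z = z * g := fun g => Subgroup.mem_center_iff.mp (hc a b) g
  have hba : b * a = a * b * z := by rw [hz]; group
  have key : b * (a * a) = a * a * b * (z * z) := by
    calc b * (a * a) = (b * a) * a := (mul_assoc _ _ _).symm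
      _ = (a * b * z) * a := by rw [hba]
      _ = (a * b) * (z * a) := by rw [mul_assoc]
      _ = (a * b) * (a * z) := by rw [← hzc a]
      _ = (a * (b * a)) * z := by group
      _ = (a * (a * b * z)) * z := by rw [hba]
      _ = a * a * b * (z * z) := by group
  have hz2 : a * a * b * (z * z) = a * a * b * 1 := by rw [mul_one, ← key, h]
  have hz1 : z = 1 := h2 z (mul_left_cancel hz2)
  rw [hz1, mul_one] at hba
  exact hba.symm

lemma heis_key2 (hc : ∀ a b : G, b⁻¹ * a⁻¹ * b * a ∈ Subgroup.center G)
    (h2 : ∀ g : G, g * g = 1 → g = 1) (A B x y zA zB : G)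
    (hzA : ∀ h : G, zA * h = h * zA) (hzB : ∀ h : G, zB * h = h * zB)
    (hx : x = A * A * zA) (hy : y = B * B * zB)
    (hxy : x * y = y * x) : A * B = B * A := by
  subst hx hy
  have hsq : (A * A) * (B * B) = (B * B) * (A * A) := by
    have e1 : (A * A * zA) * (B * B * zB) = (A * A) * (B * B) * (zA * zB) := by
      calc (A * A * zA) * (B * B * zB) = (A * A) * (zA * (B * B * zB)) := by group
        _ = (A * A) * ((B * B * zB) * zA) := by rw [hzA]
        _ = (A * A) * (B * B) * (zB * zA) := by group
        _ = (A * A) * (B * B) * (zA * zB) := by rw [hzB zA]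
    have e2 : (B * B * zB) * (A * A * zA) = (B * B) * (A * A) * (zA * zB) := by
      calc (B * B * zB) * (A * A * zA) = (B * B) * (zB * (A * A * zA)) := by group
        _ = (B * B) * ((A * A * zA) * zB) := by rw [hzB]
        _ = (B * B) * (A * A) * (zA * zB) := by group
    have := hxy
    rw [e1, e2] at this
    exact mul_right_cancel this
  have h1 : A * (B * B) = (B * B) * A := heis_sq hc h2 A (B * B) hsq
  have h2' : B * A = A * B := heis_sq hc h2 B A (by rw [mul_assoc] at h1 ⊢; exact h1.symm)
  exact h2'.symm

end Aux

/-- a finitely generated torsion-free nilpotent group of nilpotency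
class exactly 2 with an involution σ contains a σ-invariant Heisenberg subgroup:
there are x, y with [x,y] ≠ 1, σ x ∈ {x, x⁻¹} and σ y ∈ {y, y⁻¹}. -/
theorem stmt_6 (G : Type*) [Group G] (hfg : Group.FG G)
    (htf : Monoid.IsTorsionFree G)
    (hclass2le : commutator G ≤ Subgroup.center G)
    (hclass2ne : commutator G ≠ ⊥)
    (σ : G → G)
    (hσanti : ∀ g₁ g₂ : G, σ (g₁ * g₂) = σ g₂ * σ g₁)
    (hσinvol : ∀ g : G, σ (σ g) = g) :
    ∃ x y : G, x⁻¹ * y⁻¹ * x * y ≠ 1 ∧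
      (σ x = x ∨ σ x = x⁻¹) ∧ (σ y = y ∨ σ y = y⁻¹) := by
  -- basic facts about σ
  have hσ1 : σ 1 = 1 := by
    have := hσanti 1 1
    rw [mul_one] at this
    exact (mul_eq_left.mp this.symm)
  have hσinv : ∀ g : G, σ g⁻¹ = (σ g)⁻¹ := by
    intro g
    have := hσanti g⁻¹ g
    rw [inv_mul_cancel, hσ1] at this
    exact eq_inv_of_mul_eq_one_right this.symm
  -- τ is an automorphism of order ≤ 2
  set τ : G → G := fun g => (σ g)⁻¹ with hτdef
  have hτmul : ∀ g h : G, τ (g * h) = τ g * τ h := by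
    intro g h; simp only [hτdef, hσanti, mul_inv_rev]
  have hττ : ∀ g : G, τ (τ g) = g := by
    intro g; simp only [hτdef, hσinv, inv_inv, hσinvol]
  have hτinv : ∀ g : G, τ g⁻¹ = (τ g)⁻¹ := by
    intro g; simp only [hτdef, hσinv]
  -- centrality of commutators
  have hcent : ∀ a b : G, b⁻¹ * a⁻¹ * b * a ∈ Subgroup.center G := by
    intro a b
    apply hclass2le
    open scoped commutatorElement in have : ⁅b⁻¹, a⁻¹⁆ ∈ ⁅(⊤ : Subgroup G), ⊤⁆ :=
      Subgroup.commutator_mem_commutator (Subgroup.mem_top _) (Subgroup.mem_top _)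
    rw [commutator_def]
    simpa [commutatorElement_def] using this
  -- torsion-freeness gives: squares of 1 are 1
  have h2 : ∀ g : G, g * g = 1 → g = 1 := by
    intro g hg
    by_contra hne
    exact htf g hne (isOfFinOrder_iff_pow_eq_one.mpr ⟨2, two_pos, by rw [pow_two]; exact hg⟩)
  -- existence of noncommuting pair
  obtain ⟨u, v, huv⟩ : ∃ u v : G, ¬ u * v = v * u := by
    by_contra h
    push_neg at h
    apply hclass2ne
    rw [commutator_def, eq_bot_iff]
    rw [Subgroup.commutator_le]
    intro g₁ _ g₂ _
    rw [Subgroup.mem_bot, commutatorElement_eq_one_iff_mul_comm]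
    exact h g₁ g₂
  -- the plus and minus constructions
  set p : G → G := fun g => g * τ g with hpdef
  set m : G → G := fun g => g * (τ g)⁻¹ with hmdef
  set z : G → G := fun g => (τ g)⁻¹ * g⁻¹ * (τ g) * g with hzdef
  have hzcent : ∀ g h : G, z g * h = h * z g := by
    intro g h
    exact (Subgroup.mem_center_iff.mp (hcent g (τ g)) h).symm
  have hswap : ∀ g : G, τ g * g = g * τ g * z g := by
    intro g; simp only [hzdef]; group
  -- τ (m g) = (m g)⁻¹, exactly
  have hm : ∀ g : G, τ (m g) = (m g)⁻¹ := by
    intro g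
    simp only [hmdef]
    rw [hτmul, hτinv, hττ, mul_inv_rev, inv_inv]
  -- p g * m g = g * g * z g
  have hpm : ∀ g : G, p g * m g = g * g * z g := by
    intro g
    calc p g * m g = g * (τ g * g) * (τ g)⁻¹ := by simp only [hpdef, hmdef]; group
      _ = g * (g * τ g * z g) * (τ g)⁻¹ := by rw [hswap]
      _ = g * g * τ g * (z g * (τ g)⁻¹) := by group
      _ = g * g * τ g * ((τ g)⁻¹ * z g) := by rw [hzcent]
      _ = g * g * z g := by group
  -- p (p g) = p g * p g * z g
  have hppval : ∀ g : G, p (p g) = p g * p g * z g := by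
    intro g
    calc p (p g) = p g * (τ g * g) := by
          simp only [hpdef]; rw [hτmul, hττ]
      _ = p g * (g * τ g * z g) := by rw [hswap]
      _ = p g * p g * z g := by simp only [hpdef]; group
  -- τ fixes p (p g)
  have hppfix : ∀ g : G, τ (p (p g)) = p (p g) := by
    intro g
    have h1 : τ (p (p g)) = (τ g * g) * p g := by
      simp only [hpdef]
      rw [hτmul, hτmul, hττ, hτmul, hττ]
    rw [h1, hswap, hppval]
    calc g * τ g * z g * p g = p g * (z g * p g) := by simp only [hpdef]; group
      _ = p g * (p g * z g) := by rw [hzcent]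
      _ = p g * p g * z g := by group
  -- m g * m g is τ-inverted and equals (m g) * (m g) * 1
  -- Find a noncommuting pair among {p u, m u} × {p v, m v}
  have hone : ∀ h : G, (1 : G) * h = h * 1 := by intro h; rw [one_mul, mul_one]
  have hfour : ¬ (p u * p v = p v * p u ∧ p u * m v = m v * p u ∧
      m u * p v = p v * m u ∧ m u * m v = m v * m u) := by
    rintro ⟨c1, c2, c3, c4⟩
    apply huv
    have C1 : Commute (p u) (p v) := c1
    have C2 : Commute (p u) (m v) := c2
    have C3 : Commute (m u) (p v) := c3
    have C4 : Commute (m u) (m v) := c4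
    have Cbig : Commute (p u * m u) (p v * m v) :=
      (C1.mul_right C2).mul_left (C3.mul_right C4)
    rw [hpm u, hpm v] at Cbig
    exact heis_key2 hcent h2 u v _ _ (z u) (z v) (hzcent u) (hzcent v) rfl rfl Cbig
  -- helper to finish each case
  have finish : ∀ A B x y zx zy : G, (∀ h : G, zx * h = h * zx) → (∀ h : G, zy * h = h * zy) →
      x = A * A * zx → y = B * B * zy → ¬ A * B = B * A →
      (τ x = x ∨ τ x = x⁻¹) → (τ y = y ∨ τ y = y⁻¹) →
      ∃ x y : G, x⁻¹ * y⁻¹ * x * y ≠ 1 ∧ (σ x = x ∨ σ x = x⁻¹) ∧ (σ y = y ∨ σ y = y⁻¹) := by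
    intro A B x y zx zy hzx hzy hx hy hAB hτx hτy
    refine ⟨x, y, ?_, ?_, ?_⟩
    · intro hcm
      apply hAB
      refine heis_key2 hcent h2 A B x y zx zy hzx hzy hx hy ?_
      have : y * x * (x⁻¹ * y⁻¹ * x * y) = y * x * 1 := by rw [hcm]
      rw [mul_one] at this
      calc x * y = y * x * (x⁻¹ * y⁻¹ * x * y) := by group
        _ = y * x := this
    · rcases hτx with h | h
      · right
        have hh : (σ x)⁻¹ = x := h
        simpa using congrArg Inv.inv hh
      · left
        have hh : (σ x)⁻¹ = x⁻¹ := h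
        simpa using congrArg Inv.inv hh
    · rcases hτy with h | h
      · right
        have hh : (σ y)⁻¹ = y := h
        simpa using congrArg Inv.inv hh
      · left
        have hh : (σ y)⁻¹ = y⁻¹ := h
        simpa using congrArg Inv.inv hh
  -- the τ-behavior of the two candidate replacements
  have hmm : ∀ g : G, τ (m g * m g) = (m g * m g)⁻¹ := by
    intro g
    rw [hτmul, hm]
    exact (mul_inv_rev _ _).symm
  have hmmval : ∀ g : G, m g * m g = m g * m g * 1 := by intro g; rw [mul_one]
  by_cases c1 : p u * p v = p v * p u
  · by_cases c2 : p u * m v = m v * p u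
    · by_cases c3 : m u * p v = p v * m u
      · have c4 : ¬ m u * m v = m v * m u := fun c4 => hfour ⟨c1, c2, c3, c4⟩
        exact finish (m u) (m v) (m u * m u) (m v * m v) 1 1 hone hone
          (hmmval u) (hmmval v) c4 (Or.inr (hmm u)) (Or.inr (hmm v))
      · exact finish (m u) (p v) (m u * m u) (p (p v)) 1 (z v) hone (hzcent v)
          (hmmval u) (hppval v) c3 (Or.inr (hmm u)) (Or.inl (hppfix v))
    · exact finish (p u) (m v) (p (p u)) (m v * m v) (z u) 1 (hzcent u) hone
        (hppval u) (hmmval v) c2 (Or.inl (hppfix u)) (Or.inr (hmm v))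
  · exact finish (p u) (p v) (p (p u)) (p (p v)) (z u) (z v) (hzcent u) (hzcent v)
      (hppval u) (hppval v) c1 (Or.inl (hppfix u)) (Or.inl (hppfix v))
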